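/- Let μ be a Borel probability measure on ℝ^d absolutely continuous with respect to the Lebesgue measure, and let ν be a Borel probability measure on ℝ^d. Let F_n : ℝ^d → ℝ be differentiable convex functions converging pointwise on ℝ^d to a function F_∞ : ℝ^d → ℝ, and suppose the pushforwards (∇F_n)_* μ converge weakly to ν. Then F_∞ is convex, F_∞ is differentiable Lebesgue-almost everywhere, and (∇F_∞)_* μ = ν (where ∇F_∞ is defined μ-almost everywhere). -/

import Mathlib

open MeasureTheory Filter Topology Set InnerProductSpace

section Helpers

variable {E : Type*} [NormedAddCommGroup E] [NormedSpace ℝ E]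

lemma hasDerivAt_dir (f : E → ℝ) {x : E} (hx : DifferentiableAt ℝ f x) (v : E) :
    HasDerivAt (fun t : ℝ => f (x + t • v)) (fderiv ℝ f x v) 0 := by
  have h1 : HasDerivAt (fun t : ℝ => x + t • v) v 0 := by
    simpa using ((hasDerivAt_id (0:ℝ)).smul_const v).const_add x
  have h2 : HasFDerivAt f (fderiv ℝ f x) (x + (0:ℝ) • v) := by simpa using hx.hasFDerivAt
  exact h2.comp_hasDerivAt 0 h1

lemma slope_dir_tendsto (f : E → ℝ) {x : E} (hx : DifferentiableAt ℝ f x) (v : E) :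
    Tendsto (fun t : ℝ => (f (x + t • v) - f x) / t) (𝓝[≠] 0) (𝓝 (fderiv ℝ f x v)) := by
  have h := hasDerivAt_iff_tendsto_slope.mp (hasDerivAt_dir f hx v)
  refine h.congr' ?_
  filter_upwards [self_mem_nhdsWithin] with t ht
  simp [slope_def_field, div_eq_inv_mul]

lemma fderiv_le_slope (f : E → ℝ) (hconv : ConvexOn ℝ univ f) {x : E}
    (hx : DifferentiableAt ℝ f x) (v : E) : fderiv ℝ f x v ≤ f (x + v) - f x := by
  have h := (slope_dir_tendsto f hx v).mono_left
    (nhdsWithin_mono 0 (fun t (ht : t ∈ Ioi (0:ℝ)) => ne_of_gt ht))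
  refine le_of_tendsto h ?_
  filter_upwards [Ioc_mem_nhdsGT_of_mem (by constructor <;> norm_num : (0:ℝ) ∈ Ico 0 1)]
    with t ht
  obtain ⟨ht0, ht1⟩ := ht
  have hcv := hconv.2 (mem_univ x) (mem_univ (x + v)) (by linarith : (0:ℝ) ≤ 1 - t) ht0.le
    (by ring)
  have hxt : (1 - t) • x + t • (x + v) = x + t • v := by module
  rw [hxt] at hcv
  rw [div_le_iff₀ ht0]; simp only [smul_eq_mul] at hcv
  nlinarith [hcv]

/-- scalar convergence of directional derivatives -/
lemma fderiv_dir_tendsto (F : ℕ → E → ℝ) (Finf : E → ℝ)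
    (hFdiff : ∀ n, Differentiable ℝ (F n))
    (hFconv : ∀ n, ConvexOn ℝ univ (F n))
    (hlim : ∀ x, Tendsto (fun n => F n x) atTop (𝓝 (Finf x)))
    {x : E} (hx : DifferentiableAt ℝ Finf x) (v : E) :
    Tendsto (fun n => fderiv ℝ (F n) x v) atTop (𝓝 (fderiv ℝ Finf x v)) := by
  rw [Metric.tendsto_atTop]
  intro ε hε
  set L := fderiv ℝ Finf x v with hL
  -- choose t > 0 with good slopes for Finf in directions v and -v
  have h1 : ∀ᶠ t : ℝ in 𝓝[>] 0,
      |(Finf (x + t • v) - Finf x) / t - L| < ε / 2 := by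
    have := (Metric.tendsto_nhds.mp (slope_dir_tendsto Finf hx v)) (ε/2) (by linarith)
    exact (this.filter_mono (nhdsWithin_mono 0 (fun t (ht : t ∈ Ioi (0:ℝ)) => ne_of_gt ht))).mono
      (by intro t ht; rwa [Real.dist_eq] at ht)
  have h2 : ∀ᶠ t : ℝ in 𝓝[>] 0,
      |(Finf (x - t • v) - Finf x) / t - (-L)| < ε / 2 := by
    have h := (Metric.tendsto_nhds.mp (slope_dir_tendsto Finf hx (-v))) (ε/2) (by linarith)
    have h' := h.filter_mono (nhdsWithin_mono 0 (fun t (ht : t ∈ Ioi (0:ℝ)) => ne_of_gt ht))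
    refine h'.mono ?_
    intro t ht
    rw [Real.dist_eq] at ht
    have : fderiv ℝ Finf x (-v) = -L := by rw [hL, map_neg]
    rw [this] at ht
    simpa [sub_eq_add_neg, smul_neg] using ht
  have h3 : ∀ᶠ t : ℝ in 𝓝[>] 0, (0:ℝ) < t := self_mem_nhdsWithin
  obtain ⟨t, ht1, ht2, ht0⟩ := (h1.and (h2.and h3)).exists
  -- upper bounds on Finf increments
  have hu1 : Finf (x + t • v) - Finf x < t * (L + ε / 2) := by
    have := (abs_lt.mp ht1).2
    rw [div_sub' (ne_of_gt ht0)] at this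
    have := (div_lt_iff₀ ht0).mp this
    nlinarith
  have hu2 : Finf (x - t • v) - Finf x < t * (-L + ε / 2) := by
    have := (abs_lt.mp ht2).2
    rw [div_sub' (ne_of_gt ht0)] at this
    have := (div_lt_iff₀ ht0).mp this
    nlinarith
  -- eventual closeness of F n to Finf at the three points
  have hev : ∀ᶠ n in atTop, |F n (x + t • v) - Finf (x + t • v)| < t * ε / 8
      ∧ |F n (x - t • v) - Finf (x - t • v)| < t * ε / 8
      ∧ |F n x - Finf x| < t * ε / 8 := by
    have hb : (0:ℝ) < t * ε / 8 := by positivity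
    have e1 := Metric.tendsto_atTop.mp (hlim (x + t • v)) _ hb
    have e2 := Metric.tendsto_atTop.mp (hlim (x - t • v)) _ hb
    have e3 := Metric.tendsto_atTop.mp (hlim x) _ hb
    obtain ⟨N1, hN1⟩ := e1; obtain ⟨N2, hN2⟩ := e2; obtain ⟨N3, hN3⟩ := e3
    rw [eventually_atTop]
    refine ⟨max N1 (max N2 N3), fun n hn => ⟨?_, ?_, ?_⟩⟩
    · simpa [Real.dist_eq] using hN1 n (by omega)
    · simpa [Real.dist_eq] using hN2 n (by omega)
    · simpa [Real.dist_eq] using hN3 n (by omega)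
  rw [eventually_atTop] at hev
  obtain ⟨N, hN⟩ := hev
  refine ⟨N, fun n hn => ?_⟩
  obtain ⟨hb1, hb2, hb3⟩ := hN n hn
  set a := fderiv ℝ (F n) x v with ha
  -- subgradient inequalities for F n
  have hup : t * a ≤ F n (x + t • v) - F n x := by
    have := fderiv_le_slope (F n) (hFconv n) ((hFdiff n) x) (t • v)
    rwa [_root_.map_smul, smul_eq_mul] at this
  have hdn : t * (-a) ≤ F n (x - t • v) - F n x := by
    have := fderiv_le_slope (F n) (hFconv n) ((hFdiff n) x) (-(t • v))
    rw [map_neg, _root_.map_smul, smul_eq_mul] at this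
    simpa [sub_eq_add_neg] using this
  rw [Real.dist_eq]
  have habs1 := abs_lt.mp hb1
  have habs2 := abs_lt.mp hb2
  have habs3 := abs_lt.mp hb3
  have k1 : t * a < t * (L + 3 * ε / 4) := by nlinarith [habs1.2, habs3.1, hu1]
  have k2 : t * (-a) < t * (-L + 3 * ε / 4) := by nlinarith [habs2.2, habs3.1, hu2]
  have k1' := lt_of_mul_lt_mul_left k1 ht0.le
  have k2' := lt_of_mul_lt_mul_left k2 ht0.le
  rw [abs_lt]
  constructor <;> linarith

section Euclid
variable {d : ℕ}
local notation "𝔼" => EuclideanSpace ℝ (Fin d)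

lemma fderiv_eq_gradient_coord (h : 𝔼 → ℝ) (x : 𝔼) (i : Fin d) :
    fderiv ℝ h x (EuclideanSpace.single i (1:ℝ)) = gradient h x i := by
  have := toDual_symm_apply (𝕜 := ℝ) (E := 𝔼) (x := EuclideanSpace.single i (1:ℝ))
    (y := fderiv ℝ h x)
  rw [gradient, ← this, EuclideanSpace.inner_single_right]
  simp

lemma gradient_tendsto (F : ℕ → 𝔼 → ℝ) (Finf : 𝔼 → ℝ)
    (hFdiff : ∀ n, Differentiable ℝ (F n))
    (hFconv : ∀ n, ConvexOn ℝ univ (F n))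
    (hlim : ∀ x, Tendsto (fun n => F n x) atTop (𝓝 (Finf x)))
    {x : 𝔼} (hx : DifferentiableAt ℝ Finf x) :
    Tendsto (fun n => gradient (F n) x) atTop (𝓝 (gradient Finf x)) := by
  have hcoord : ∀ i : Fin d, Tendsto (fun n => gradient (F n) x i) atTop
      (𝓝 (gradient Finf x i)) := by
    intro i
    have := fderiv_dir_tendsto F Finf hFdiff hFconv hlim hx (EuclideanSpace.single i (1:ℝ))
    simpa only [fderiv_eq_gradient_coord] using this
  let H := PiLp.continuousLinearEquiv 2 ℝ (fun _ : Fin d => ℝ)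
  have h1 : Tendsto (fun n => H (gradient (F n) x)) atTop (𝓝 (H (gradient Finf x))) :=
    tendsto_pi_nhds.mpr (fun i => hcoord i)
  have h2 := (H.symm.continuous.tendsto _).comp h1
  have h3 : (⇑H.symm ∘ fun n => H (gradient (F n) x)) = fun n => gradient (F n) x := by
    ext n; simp
  rwa [h3] at h2

lemma convex_ae_differentiable (f : 𝔼 → ℝ) (hf : ConvexOn ℝ univ f) :
    ∀ᵐ x ∂(volume : Measure 𝔼), DifferentiableAt ℝ f x := by
  have hcont : Continuous f := hf.locallyLipschitz.continuous
  have hball : ∀ n : ℕ, ∀ᵐ x ∂(volume : Measure 𝔼),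
      x ∈ Metric.ball (0:𝔼) n → DifferentiableAt ℝ f x := by
    intro n
    obtain ⟨K, hK⟩ : ∃ K, LipschitzOnWith K f (Metric.ball (0:𝔼) n) := by
      refine ConvexOn.exists_lipschitzOnWith_of_isBounded
        (hf.subset (subset_univ _) (convex_ball _ _)) (by linarith : (n:ℝ) < n + 1) ?_
      have hcpt : IsCompact (f '' Metric.closedBall (0:𝔼) (n+1)) :=
        (isCompact_closedBall _ _).image hcont
      exact hcpt.isBounded.subset (image_mono Metric.ball_subset_closedBall)
    filter_upwards [hK.ae_differentiableWithinAt_of_mem] with x hx hmem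
    exact (hx hmem).differentiableAt (Metric.isOpen_ball.mem_nhds hmem)
  filter_upwards [ae_all_iff.mpr hball] with x hx
  obtain ⟨n, hn⟩ := exists_nat_gt ‖x‖
  exact hx n (by simpa [Metric.mem_ball, dist_zero_right] using hn)

end Euclid

end Helpers

/-- If differentiable convex potentials `Fₙ` converge pointwise to `F_∞` and the gradient
pushforwards `(∇Fₙ)_* μ` converge weakly to `ν` (with `μ ≪ Lebesgue`), then `F_∞` is convex,
differentiable Lebesgue-a.e., and `(∇F_∞)_* μ = ν`. -/
theorem limit_potential_convex_and_pushforward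
    (d : ℕ) (μ ν : Measure (EuclideanSpace ℝ (Fin d)))
    [IsProbabilityMeasure μ] [IsProbabilityMeasure ν]
    (hac : μ ≪ volume)
    (F : ℕ → EuclideanSpace ℝ (Fin d) → ℝ)
    (Finf : EuclideanSpace ℝ (Fin d) → ℝ)
    (hFdiff : ∀ n, Differentiable ℝ (F n))
    (hFconv : ∀ n, ConvexOn ℝ univ (F n))
    (hlim : ∀ x, Tendsto (fun n => F n x) atTop (𝓝 (Finf x)))
    (hweak : ∀ g : BoundedContinuousFunction (EuclideanSpace ℝ (Fin d)) ℝ,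
      Tendsto (fun n => ∫ x, g x ∂(μ.map (fun x => gradient (F n) x)))
        atTop (𝓝 (∫ y, g y ∂ν))) :
    ConvexOn ℝ univ Finf ∧
    (∀ᵐ x ∂(volume : Measure (EuclideanSpace ℝ (Fin d))), DifferentiableAt ℝ Finf x) ∧
    μ.map (fun x => gradient Finf x) = ν := by
  -- convexity of the limit
  have hconv : ConvexOn ℝ univ Finf := by
    refine ⟨convex_univ, fun x _ y _ a b ha hb hab => ?_⟩
    refine le_of_tendsto_of_tendsto' (hlim _) (((hlim x).const_mul a).add
      ((hlim y).const_mul b)) (fun n => ?_)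
    have := (hFconv n).2 (mem_univ x) (mem_univ y) ha hb hab
    simpa [smul_eq_mul] using this
  -- a.e. differentiability
  have hdiff : ∀ᵐ x ∂(volume : Measure (EuclideanSpace ℝ (Fin d))), DifferentiableAt ℝ Finf x :=
    convex_ae_differentiable Finf hconv
  refine ⟨hconv, hdiff, ?_⟩
  -- measurability of gradients
  have hgradmeas : ∀ h : EuclideanSpace ℝ (Fin d) → ℝ, Measurable (fun x => gradient h x) := fun h =>
    ((InnerProductSpace.toDual ℝ (EuclideanSpace ℝ (Fin d))).symm.continuous.measurable).comp (measurable_fderiv ℝ h)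
  -- a.e. convergence of gradients w.r.t. μ
  have hμdiff : ∀ᵐ x ∂μ, DifferentiableAt ℝ Finf x := hac.ae_le hdiff
  have htend : ∀ᵐ x ∂μ, Tendsto (fun n => gradient (F n) x) atTop (𝓝 (gradient Finf x)) :=
    hμdiff.mono fun x hx => gradient_tendsto F Finf hFdiff hFconv hlim hx
  -- weak convergence to the pushforward of the limit gradient
  have hweak2 : ∀ g : BoundedContinuousFunction (EuclideanSpace ℝ (Fin d)) ℝ,
      Tendsto (fun n => ∫ x, g x ∂(μ.map (fun x => gradient (F n) x)))
        atTop (𝓝 (∫ y, g y ∂(μ.map (fun x => gradient Finf x)))) := by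
    intro g
    have heq : ∀ n, ∫ x, g x ∂(μ.map (fun x => gradient (F n) x))
        = ∫ x, g (gradient (F n) x) ∂μ := fun n =>
      integral_map (hgradmeas _).aemeasurable g.continuous.aestronglyMeasurable
    have heq' : ∫ x, g x ∂(μ.map (fun x => gradient Finf x))
        = ∫ x, g (gradient Finf x) ∂μ :=
      integral_map (hgradmeas _).aemeasurable g.continuous.aestronglyMeasurable
    simp only [heq, heq']
    refine tendsto_integral_of_dominated_convergence (fun _ => ‖g‖)
      (fun n => (g.continuous.measurable.comp (hgradmeas _)).aestronglyMeasurable) (integrable_const _)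
      (fun n => Eventually.of_forall fun x => ?_) ?_
    · exact g.norm_coe_le_norm _
    · exact htend.mono fun x hx => ((g.continuous.tendsto _).comp hx)
  -- uniqueness of weak limits via ProbabilityMeasure
  haveI hP : ∀ n, IsProbabilityMeasure (μ.map (fun x => gradient (F n) x)) := fun n =>
    Measure.isProbabilityMeasure_map (hgradmeas _).aemeasurable
  haveI hPinf : IsProbabilityMeasure (μ.map (fun x => gradient Finf x)) :=
    Measure.isProbabilityMeasure_map (hgradmeas _).aemeasurable
  let P : ℕ → ProbabilityMeasure (EuclideanSpace ℝ (Fin d)) := fun n => ⟨μ.map (fun x => gradient (F n) x), hP n⟩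
  let Plim : ProbabilityMeasure (EuclideanSpace ℝ (Fin d)) := ⟨μ.map (fun x => gradient Finf x), hPinf⟩
  let Q : ProbabilityMeasure (EuclideanSpace ℝ (Fin d)) := ⟨ν, inferInstance⟩
  have t1 : Tendsto P atTop (𝓝 Q) :=
    ProbabilityMeasure.tendsto_iff_forall_integral_tendsto.mpr fun g => hweak g
  have t2 : Tendsto P atTop (𝓝 Plim) :=
    ProbabilityMeasure.tendsto_iff_forall_integral_tendsto.mpr fun g => hweak2 g
  have : Plim = Q := tendsto_nhds_unique t2 t1
  exact congrArg Subtype.val this
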